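/- Fix a codeword c ∈ C. The map L taking a feasible LP point (f, w) to (f̃, w̃), where for each coordinate i with c_i = β one sets f̃_i^(α) = 1 − ∑_{γ≠0} f_i^(γ) if α = −β and f̃_i^(α) = f_i^(α+β) otherwise, and where w̃_{j,r} = w_{j, r + x_j(c)}, maps the LP polytope Q into itself. -/

import Mathlib

open Finset
open scoped Classical

/-- The single parity check code C_j associated with row j of H. -/
def SPC {R : Type} [CommRing R] [DecidableEq R] {m n : ℕ} (H : Matrix (Fin m) (Fin n) R)
    (j : Fin m) : Set ({i : Fin n // H j i ≠ 0} → R) :=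
  {b | ∑ i : {i : Fin n // H j i ≠ 0}, b i * H j i.1 = 0}

/-- The projection of c ∈ R^n onto the support of row j. -/
def proj {R : Type} [CommRing R] {m n : ℕ} (H : Matrix (Fin m) (Fin n) R)
    (j : Fin m) (c : Fin n → R) : {i : Fin n // H j i ≠ 0} → R :=
  fun i => c i.1

/-- Membership in the LP decoding polytope Q: w is nonnegative on each C_j,
sums to one over each C_j, and f is consistent with w. -/
def memQ {R : Type} [CommRing R] [Fintype R] [DecidableEq R] {m n : ℕ}
    (H : Matrix (Fin m) (Fin n) R)
    (f : Fin n → {α : R // α ≠ 0} → ℝ)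
    (w : (j : Fin m) → ({i : Fin n // H j i ≠ 0} → R) → ℝ) : Prop :=
  (∀ (j : Fin m) (b : {i : Fin n // H j i ≠ 0} → R), b ∈ SPC H j → 0 ≤ w j b) ∧
  (∀ j : Fin m,
    ∑ b : {i : Fin n // H j i ≠ 0} → R, (if b ∈ SPC H j then w j b else 0) = 1) ∧
  (∀ (j : Fin m) (i : {i : Fin n // H j i ≠ 0}) (α : {α : R // α ≠ 0}),
    f i.1 α = ∑ b : {i : Fin n // H j i ≠ 0} → R,
      (if b ∈ SPC H j ∧ b i = α.1 then w j b else 0))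

/-- The f-part of the translation map L determined by the codeword c. -/
def Lf {R : Type} [CommRing R] [Fintype R] [DecidableEq R] {n : ℕ} (c : Fin n → R)
    (f : Fin n → {α : R // α ≠ 0} → ℝ) : Fin n → {α : R // α ≠ 0} → ℝ :=
  fun i α =>
    if h : (α : R) = -(c i) then 1 - ∑ γ : {γ : R // γ ≠ 0}, f i γ
    else f i ⟨(α : R) + c i, fun hz => h (eq_neg_iff_add_eq_zero.mpr hz)⟩

/-- The w-part of the translation map L determined by the codeword c. -/
def Lw {R : Type} [CommRing R] [DecidableEq R] {m n : ℕ} (H : Matrix (Fin m) (Fin n) R)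
    (c : Fin n → R)
    (w : (j : Fin m) → ({i : Fin n // H j i ≠ 0} → R) → ℝ) :
    (j : Fin m) → ({i : Fin n // H j i ≠ 0} → R) → ℝ :=
  fun j r => w j (r + proj H j c)

lemma proj_mem_SPC {R : Type} [CommRing R] [DecidableEq R] {m n : ℕ}
    (H : Matrix (Fin m) (Fin n) R) (c : Fin n → R)
    (hc : ∀ j : Fin m, ∑ i : Fin n, c i * H j i = 0) (j : Fin m) :
    proj H j c ∈ SPC H j := by
  unfold SPC proj
  simp only [Set.mem_setOf_eq]
  have h1 : ∑ x : {i : Fin n // H j i ≠ 0}, c x.1 * H j x.1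
      = ∑ x ∈ Finset.univ.filter (fun i => H j i ≠ 0), c x * H j x :=
    (Finset.sum_subtype (Finset.univ.filter (fun i => H j i ≠ 0))
      (fun x => by simp) (fun x => c x * H j x)).symm
  have h2 : ∑ x ∈ Finset.univ.filter (fun i => H j i ≠ 0), c x * H j x
      = ∑ x : Fin n, c x * H j x :=
    Finset.sum_subset (Finset.filter_subset _ _) (fun x _ hx => by
      simp only [Finset.mem_filter, Finset.mem_univ, true_and, not_not] at hx
      simp [hx])
  rw [h1, h2, hc j]

lemma add_mem_SPC_iff {R : Type} [CommRing R] [DecidableEq R] {m n : ℕ}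
    {H : Matrix (Fin m) (Fin n) R} {j : Fin m} {p : {i : Fin n // H j i ≠ 0} → R}
    (hp : p ∈ SPC H j) (b : {i : Fin n // H j i ≠ 0} → R) :
    b + p ∈ SPC H j ↔ b ∈ SPC H j := by
  simp only [SPC, Set.mem_setOf_eq] at hp ⊢
  simp only [Pi.add_apply, add_mul, Finset.sum_add_distrib, hp, add_zero]

/-- The translation map L maps the LP polytope Q into itself. -/
theorem L_maps_Q_to_Q {R : Type} [CommRing R] [Fintype R] [DecidableEq R] {m n : ℕ}
    (H : Matrix (Fin m) (Fin n) R) (c : Fin n → R)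
    (hc : ∀ j : Fin m, ∑ i : Fin n, c i * H j i = 0)
    (f : Fin n → {α : R // α ≠ 0} → ℝ)
    (w : (j : Fin m) → ({i : Fin n // H j i ≠ 0} → R) → ℝ)
    (hQ : memQ H f w) : memQ H (Lf c f) (Lw H c w) := by
  obtain ⟨h1, h2, h3⟩ := hQ
  have hp : ∀ j, proj H j c ∈ SPC H j := proj_mem_SPC H c hc
  refine ⟨?_, ?_, ?_⟩
  · intro j b hb
    exact h1 j _ ((add_mem_SPC_iff (hp j) b).mpr hb)
  · intro j
    rw [← h2 j]
    refine Fintype.sum_equiv (Equiv.addRight (proj H j c)) _ _ (fun r => ?_)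
    simp only [Equiv.coe_addRight, Lw]
    by_cases h : r ∈ SPC H j
    · rw [if_pos h]; exact (if_pos ((add_mem_SPC_iff (hp j) r).mpr h)).symm
    · rw [if_neg h]; exact (if_neg (fun hr => h ((add_mem_SPC_iff (hp j) r).mp hr))).symm
  · intro j i α
    unfold Lf
    split_ifs with h
    · -- α = -(c i)
      have hsum : ∑ γ : {γ : R // γ ≠ 0}, f i.1 γ
          = ∑ b : {i : Fin n // H j i ≠ 0} → R,
              (if b ∈ SPC H j ∧ b i ≠ 0 then w j b else 0) := by
        simp_rw [h3 j i]
        rw [Finset.sum_comm]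
        refine Finset.sum_congr rfl (fun b _ => ?_)
        by_cases hb : b ∈ SPC H j
        · by_cases hz : b i = 0
          · simp only [hb, true_and, hz]
            rw [if_neg (by simp)]
            refine Finset.sum_eq_zero (fun γ _ => ?_)
            rw [if_neg (fun hg => γ.2 hg.symm)]
          · rw [if_pos ⟨hb, hz⟩]
            rw [Fintype.sum_eq_single (⟨b i, hz⟩ : {γ : R // γ ≠ 0})
              (fun γ hγ => if_neg (fun hg => hγ (Subtype.ext hg.2.symm)))]
            exact if_pos ⟨hb, rfl⟩
        · simp [hb]
      have h0 : (1 : ℝ) - ∑ γ : {γ : R // γ ≠ 0}, f i.1 γ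
          = ∑ b : {i : Fin n // H j i ≠ 0} → R,
              (if b ∈ SPC H j ∧ b i = 0 then w j b else 0) := by
        rw [hsum, ← h2 j, ← Finset.sum_sub_distrib]
        refine Finset.sum_congr rfl (fun b _ => ?_)
        by_cases hb : b ∈ SPC H j
        · by_cases hz : b i = 0
          · simp [hb, hz]
          · simp [hb, hz]
        · simp [hb]
      rw [h0]
      refine (Fintype.sum_equiv (Equiv.addRight (proj H j c)) _ _ (fun r => ?_)).symm
      simp only [Equiv.coe_addRight, Lw]
      have hiff : (r ∈ SPC H j ∧ r i = α.1) ↔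
          (r + proj H j c ∈ SPC H j ∧ (r + proj H j c) i = 0) := by
        rw [add_mem_SPC_iff (hp j)]
        constructor
        · rintro ⟨h1', h2'⟩
          refine ⟨h1', ?_⟩
          simp [Pi.add_apply, proj, h2', h]
        · rintro ⟨h1', h2'⟩
          refine ⟨h1', ?_⟩
          have := h2'
          simp only [Pi.add_apply, proj] at this
          rw [h]
          exact eq_neg_of_add_eq_zero_left this
      by_cases hr : r ∈ SPC H j ∧ r i = α.1
      · rw [if_pos hr]; exact (if_pos (hiff.mp hr)).symm
      · rw [if_neg hr]; exact (if_neg (fun hx => hr (hiff.mpr hx))).symm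
    · rw [h3 j i]
      refine (Fintype.sum_equiv (Equiv.addRight (proj H j c)) _ _ (fun r => ?_)).symm
      simp only [Equiv.coe_addRight, Lw]
      have hiff : (r ∈ SPC H j ∧ r i = α.1) ↔
          (r + proj H j c ∈ SPC H j ∧ (r + proj H j c) i = α.1 + c i.1) := by
        rw [add_mem_SPC_iff (hp j)]
        simp only [Pi.add_apply, proj]
        constructor
        · rintro ⟨h1', h2'⟩; exact ⟨h1', by rw [h2']⟩
        · rintro ⟨h1', h2'⟩; exact ⟨h1', by exact add_right_cancel h2'⟩
      by_cases hr : r ∈ SPC H j ∧ r i = α.1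
      · rw [if_pos hr]; exact (if_pos (hiff.mp hr)).symm
      · rw [if_neg hr]; exact (if_neg (fun hx => hr (hiff.mpr hx))).symm
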